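/- Let n ≥ 2. For any roots of the A_n root system of the form (i,j), (i,j'), (i',j): there exists 0 ≤ l ≤ n such that both (i,j) and (i,j') belong to the Weyl chamber C_{γ_0^l}, and there exists 0 ≤ l' ≤ n such that both (i,j) and (i',j) belong to C_{γ_0^{l'}}. In other words, {(i,j),(i,j')} < 𝒞_0 and {(i,j),(i',j)} < 𝒞_0. -/

import Mathlib

/-- The Weyl chamber `C_γ = {(γ(i),γ(j)) : i < j}` of the `A_n` root system, for a
permutation `γ` of `{1,…,n+1}` (realized as `Fin (n+1)`). -/
def Cham (n : ℕ) (γ : Equiv.Perm (Fin (n + 1))) : Set (Fin (n + 1) × Fin (n + 1)) :=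
  { x | ∃ i j : Fin (n + 1), i < j ∧ x = (γ i, γ j) }

open Fin.NatCast Fin.CommRing

lemma finRotate_pow_apply (n l : ℕ) : ∀ x : Fin (n + 1),
    (finRotate (n + 1) ^ l) x = x + (l : Fin (n + 1)) := by
  induction l with
  | zero => simp
  | succ l ih =>
    intro x
    rw [pow_succ, Equiv.Perm.mul_apply, finRotate_succ_apply, ih (x + 1)]
    push_cast
    ring

lemma mem_cham_iff (n l : ℕ) (a b : Fin (n + 1)) :
    (a, b) ∈ Cham n (finRotate (n + 1) ^ l) ↔ a - (l : Fin (n + 1)) < b - (l : Fin (n + 1)) := by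
  constructor
  · rintro ⟨p, q, hlt, heq⟩
    obtain ⟨h1, h2⟩ := Prod.mk.injEq .. ▸ heq
    rw [h1, h2, finRotate_pow_apply, finRotate_pow_apply, add_sub_cancel_right,
      add_sub_cancel_right]
    exact hlt
  · intro h
    exact ⟨a - l, b - l, h, by rw [finRotate_pow_apply, finRotate_pow_apply,
      sub_add_cancel, sub_add_cancel]⟩

/-- For `n ≥ 2` and roots `(i,j)`, `(i,j')`, `(i',j)` of the `A_n` root
system: both `{(i,j),(i,j')}` and `{(i,j),(i',j)}` are contained in chambers of
`𝒞_0 = {C_{γ₀^l} : 0 ≤ l ≤ n}`, where `γ₀` is the cyclic permutation `(1 2 … n+1)`. -/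
theorem sameRowCol_pair_lt_C0 (n : ℕ) (hn : 2 ≤ n) (i j i' j' : Fin (n + 1))
    (hij : i ≠ j) (hij' : i ≠ j') (hi'j : i' ≠ j) :
    (∃ l : ℕ, l ≤ n ∧ (i, j) ∈ Cham n (finRotate (n + 1) ^ l) ∧
      (i, j') ∈ Cham n (finRotate (n + 1) ^ l)) ∧
    (∃ l : ℕ, l ≤ n ∧ (i, j) ∈ Cham n (finRotate (n + 1) ^ l) ∧
      (i', j) ∈ Cham n (finRotate (n + 1) ^ l)) := by
  constructor
  · refine ⟨i.val, Nat.lt_succ_iff.mp i.isLt, ?_, ?_⟩ <;>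
    · rw [mem_cham_iff, Fin.cast_val_eq_self, sub_self]
      exact Fin.pos_of_ne_zero (by rwa [ne_eq, sub_eq_zero, eq_comm])
  · refine ⟨(j + 1 : Fin (n + 1)).val, Nat.lt_succ_iff.mp (j + 1 : Fin (n+1)).isLt, ?_, ?_⟩ <;>
    · rw [mem_cham_iff, Fin.cast_val_eq_self]
      have hj : j - (j + 1) = Fin.last n := by
        have : j - (j + 1) = -1 := by ring
        rw [this]
        apply Fin.ext
        simp [Fin.coe_neg_one]
      rw [hj]
      apply Fin.lt_last_iff_ne_last.2
      rw [← hj]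
      intro h
      have := sub_left_injective h
      simp_all
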